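/- (Invariance of the transition system of a timed automaton.) Let A be a timed automaton using the reset-point semantics, where a configuration is (p, μ, now) with μ : X → ℝ≥0 a reset-point assignment with μ(x) ≤ now, and there is a transition (p, μ, now) →(a,t) (q, ν, t) whenever t ≥ now, the valuation x ↦ t − μ(x) satisfies the transition rule's clock constraint (a Boolean combination of comparisons of clock values and differences to integers), and ν agrees with t on reset clocks Y and with μ elsewhere. Then for every timed automorphism π: (p, μ, now) →(a,t) (q, ν, t) if and only if (p, π∘μ, π(now)) →(a,π(t)) (q, π∘ν, π(t)). -/

import Mathlib

/-- A timed automorphism: a monotone bijection `π : ℝ → ℝ` with `π (x+1) = π x + 1`. -/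
def IsTimedAutomorphism (π : ℝ → ℝ) : Prop :=
  Function.Bijective π ∧ StrictMono π ∧ ∀ x : ℝ, π (x + 1) = π x + 1

/-- An `S`-timed automorphism: a timed automorphism fixing every point of `S`. -/
def IsSTimedAutomorphism (S : Set ℝ) (π : ℝ → ℝ) : Prop :=
  IsTimedAutomorphism π ∧ ∀ t ∈ S, π t = t

/-- A timed word: a finite sequence of letters with nonnegative, nondecreasing timestamps. -/
def IsTimedWord {A : Type*} (w : List (A × ℝ)) : Prop :=
  (∀ p ∈ w, 0 ≤ p.2) ∧ (w.map Prod.snd).Chain' (· ≤ ·)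

/-- Pointwise action of a real function on the timestamps of a timed word. -/
def mapTW {A : Type*} (π : ℝ → ℝ) (w : List (A × ℝ)) : List (A × ℝ) :=
  w.map fun p => (p.1, π p.2)

/-- Comparison operators appearing in clock constraints. -/
inductive CmpOp where
  | lt | le | eq | ge | gt

def CmpOp.holds : CmpOp → ℝ → ℝ → Prop
  | .lt, a, b => a < b
  | .le, a, b => a ≤ b
  | .eq, a, b => a = b
  | .ge, a, b => a ≥ b
  | .gt, a, b => a > b

/-- Clock constraints: Boolean combinations of comparisons of clock values and of
differences of clock values with integer constants. -/
inductive ClockConstraint (X : Type*) where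
  | tt : ClockConstraint X
  | ff : ClockConstraint X
  | diff : X → X → CmpOp → ℤ → ClockConstraint X
  | single : X → CmpOp → ℤ → ClockConstraint X
  | not : ClockConstraint X → ClockConstraint X
  | and : ClockConstraint X → ClockConstraint X → ClockConstraint X
  | or : ClockConstraint X → ClockConstraint X → ClockConstraint X

/-- Satisfaction of a clock constraint by a clock valuation `ν : X → ℝ`. -/
def ClockConstraint.sat {X : Type*} (ν : X → ℝ) : ClockConstraint X → Prop
  | .tt => True
  | .ff => False
  | .diff x y c z => CmpOp.holds c (ν x - ν y) (z : ℝ)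
  | .single x c z => CmpOp.holds c (ν x) (z : ℝ)
  | .not φ => ¬ ClockConstraint.sat ν φ
  | .and φ ψ => ClockConstraint.sat ν φ ∧ ClockConstraint.sat ν ψ
  | .or φ ψ => ClockConstraint.sat ν φ ∨ ClockConstraint.sat ν ψ

/-- All integer constants of the constraint have absolute value at most `m`. -/
def ClockConstraint.constBounded {X : Type*} (m : ℕ) : ClockConstraint X → Prop
  | .tt => True
  | .ff => True
  | .diff _ _ _ z => z.natAbs ≤ m
  | .single _ _ z => z.natAbs ≤ m
  | .not φ => ClockConstraint.constBounded m φ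
  | .and φ ψ => ClockConstraint.constBounded m φ ∧ ClockConstraint.constBounded m ψ
  | .or φ ψ => ClockConstraint.constBounded m φ ∧ ClockConstraint.constBounded m ψ

/-- A (nondeterministic) timed automaton over alphabet `A`, locations `Q`, clocks `X`.
A rule `(p, a, φ, Y, q)` reads letter `a` in location `p`, tests guard `φ`, resets the
clocks in `Y` and moves to location `q`. -/
structure TimedAutomaton (A Q X : Type*) where
  init : Set Q
  final : Set Q
  rules : Set (Q × A × ClockConstraint X × Set X × Q)

/-- A configuration in the reset-point semantics: a location, a reset-point
assignment for the clocks, and the current timestamp. -/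
abbrev TAConfig (Q X : Type*) := Q × (X → ℝ) × ℝ

/-- One transition of the reset-point semantics: at time `t ≥ now`, the guard of some
rule is satisfied by the valuation `x ↦ t - μ x`; clocks in the reset set get reset
point `t`, the others keep their reset points. -/
def TimedAutomaton.Step {A Q X : Type*} (Aut : TimedAutomaton A Q X)
    (c : TAConfig Q X) (e : A × ℝ) (c' : TAConfig Q X) : Prop :=
  c'.2.2 = e.2 ∧ c.2.2 ≤ e.2 ∧
  ∃ φ Y, (c.1, e.1, φ, Y, c'.1) ∈ Aut.rules ∧
    ClockConstraint.sat (fun x => e.2 - c.2.1 x) φ ∧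
    (∀ x ∈ Y, c'.2.1 x = e.2) ∧ (∀ x ∉ Y, c'.2.1 x = c.2.1 x)

/-- Runs of a timed automaton over a timed word. -/
inductive TimedAutomaton.Run {A Q X : Type*} (Aut : TimedAutomaton A Q X) :
    TAConfig Q X → List (A × ℝ) → TAConfig Q X → Prop
  | nil (c : TAConfig Q X) : Aut.Run c [] c
  | cons {c c' c'' : TAConfig Q X} {e : A × ℝ} {w : List (A × ℝ)} :
      Aut.Step c e c' → Aut.Run c' w c'' → Aut.Run c (e :: w) c''

/-- Language of a configuration: timed words admitting an accepting run from it. -/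
def TimedAutomaton.LangFrom {A Q X : Type*} (Aut : TimedAutomaton A Q X)
    (c : TAConfig Q X) : Set (List (A × ℝ)) :=
  {w | ∃ c', Aut.Run c w c' ∧ c'.1 ∈ Aut.final}

/-- Language of a timed automaton: union over initial configurations. -/
def TimedAutomaton.Lang {A Q X : Type*} (Aut : TimedAutomaton A Q X) :
    Set (List (A × ℝ)) :=
  {w | ∃ p ∈ Aut.init, w ∈ Aut.LangFrom (p, fun _ => 0, 0)}

/-- A configuration is reachable if some run from an initial configuration ends in it. -/
def TimedAutomaton.Reachable {A Q X : Type*} (Aut : TimedAutomaton A Q X)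
    (c : TAConfig Q X) : Prop :=
  ∃ p ∈ Aut.init, ∃ w, Aut.Run (p, fun _ => 0, 0) w c

/-- Determinism: unique initial location, and two rules from the same location on the
same letter with jointly satisfiable guards agree on resets and target. -/
def TimedAutomaton.IsDeterministic {A Q X : Type*} (Aut : TimedAutomaton A Q X) : Prop :=
  (∃! p, p ∈ Aut.init) ∧
  ∀ p a φ Y q φ' Y' q', (p, a, φ, Y, q) ∈ Aut.rules → (p, a, φ', Y', q') ∈ Aut.rules →
    (∃ ν : X → ℝ, ClockConstraint.sat ν φ ∧ ClockConstraint.sat ν φ') →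
    Y = Y' ∧ q = q'


section Aux
variable {π : ℝ → ℝ}

lemma TA.shift_int (hπ : IsTimedAutomorphism π) (z : ℤ) (x : ℝ) : π (x + z) = π x + z := by
  obtain ⟨-, -, h1⟩ := hπ
  have hnat : ∀ n : ℕ, ∀ y : ℝ, π (y + n) = π y + n := by
    intro n
    induction n with
    | zero => simp
    | succ k ih =>
      intro y
      have := h1 (y + k)
      push_cast
      rw [show y + ((k:ℝ) + 1) = y + (k:ℝ) + 1 by ring, this, ih y]
      ring
  induction z using Int.induction_on with
  | zero => simp
  | succ n ih =>
    have h := hnat (n+1) x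
    push_cast at h ⊢
    linarith
  | pred n ih =>
    have h := h1 (x + (-(n:ℝ) - 1))
    rw [show x + (-(n:ℝ) - 1) + 1 = x + -(n:ℝ) by ring] at h
    push_cast at ih ⊢
    linarith

lemma TA.cmp_iff (hπ : IsTimedAutomorphism π) (c : CmpOp) (u v : ℝ) (z : ℤ) :
    CmpOp.holds c (π u - π v) z ↔ CmpOp.holds c (u - v) z := by
  have hm := hπ.2.1
  have h1 : π u - π v ≤ z ↔ u - v ≤ z := by
    rw [sub_le_iff_le_add, sub_le_iff_le_add, add_comm (z:ℝ) (π v), add_comm (z:ℝ) v,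
      ← TA.shift_int hπ z v]
    exact hm.le_iff_le
  have h2 : π u - π v < z ↔ u - v < z := by
    rw [sub_lt_iff_lt_add, sub_lt_iff_lt_add, add_comm (z:ℝ) (π v), add_comm (z:ℝ) v,
      ← TA.shift_int hπ z v]
    exact hm.lt_iff_lt
  have h3 : π u - π v = z ↔ u - v = z := by
    rw [sub_eq_iff_eq_add, sub_eq_iff_eq_add, add_comm (z:ℝ) (π v), add_comm (z:ℝ) v,
      ← TA.shift_int hπ z v]
    exact hm.injective.eq_iff
  cases c
  · exact h2
  · exact h1
  · exact h3
  · simp only [CmpOp.holds, ge_iff_le, ← not_lt]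
    exact not_congr h2
  · simp only [CmpOp.holds, gt_iff_lt, ← not_le]
    exact not_congr h1

lemma TA.sat_iff (hπ : IsTimedAutomorphism π) (t : ℝ) {X' : Type*} (μ : X' → ℝ)
    (φ : ClockConstraint X') :
    ClockConstraint.sat (fun x => π t - π (μ x)) φ ↔
      ClockConstraint.sat (fun x => t - μ x) φ := by
  induction φ with
  | tt => simp [ClockConstraint.sat]
  | ff => simp [ClockConstraint.sat]
  | diff x y c z =>
    simp only [ClockConstraint.sat]
    rw [show (π t - π (μ x)) - (π t - π (μ y)) = π (μ y) - π (μ x) by ring,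
      show (t - μ x) - (t - μ y) = μ y - μ x by ring]
    exact TA.cmp_iff hπ c (μ y) (μ x) z
  | single x c z =>
    simp only [ClockConstraint.sat]
    exact TA.cmp_iff hπ c t (μ x) z
  | not φ ih => simp [ClockConstraint.sat, ih]
  | and φ ψ ih1 ih2 => simp [ClockConstraint.sat, ih1, ih2]
  | or φ ψ ih1 ih2 => simp [ClockConstraint.sat, ih1, ih2]

end Aux

/-- Invariance of the transition system of a timed automaton: a timed automorphism
maps transitions to transitions, and conversely. -/
theorem step_invariant_under_timed_automorphism
    {A Q X : Type*} (Aut : TimedAutomaton A Q X)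
    (π : ℝ → ℝ) (hπ : IsTimedAutomorphism π)
    (p q : Q) (μ ν : X → ℝ) (now t : ℝ) (a : A) :
    Aut.Step (p, μ, now) (a, t) (q, ν, t) ↔
      Aut.Step (p, π ∘ μ, π now) (a, π t) (q, π ∘ ν, π t) := by
  obtain ⟨hbij, hm, -⟩ := id hπ
  have hinj := hbij.1
  simp only [TimedAutomaton.Step, Function.comp]
  constructor
  · rintro ⟨-, hle, φ, Y, hr, hsat, hres, hkeep⟩
    refine ⟨trivial, hm.monotone hle, φ, Y, hr, ?_, ?_, ?_⟩
    · exact (TA.sat_iff hπ t μ φ).mpr hsat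
    · intro x hx; rw [hres x hx]
    · intro x hx; rw [hkeep x hx]
  · rintro ⟨-, hle, φ, Y, hr, hsat, hres, hkeep⟩
    refine ⟨trivial, hm.le_iff_le.mp hle, φ, Y, hr, ?_, ?_, ?_⟩
    · exact (TA.sat_iff hπ t μ φ).mp hsat
    · intro x hx; exact hinj (hres x hx)
    · intro x hx; exact hinj (hkeep x hx)
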